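/- For natural numbers n and k with 0 ≤ k ≤ n, and every real number x, the Euler polynomials satisfy Σ_{j=0}^{n-k} C(n-k, j) (-1)^j E_{j+k}(x) = (-1)^{n+k+1} Σ_{j=0}^{k} C(k, j) E_{n-j}(x) + 2 x^k (1-x)^{n-k}. -/

import Mathlib

open Polynomial Finset

noncomputable def toFinsuppL : Polynomial ℝ →ₗ[ℝ] (ℕ →₀ ℝ) where
  toFun p := p.toFinsupp.coeff
  map_add' a b := by rw [Polynomial.toFinsupp_add]; rfl
  map_smul' c p := by rw [Polynomial.toFinsupp_smul]; rfl

noncomputable def phiL (E : ℕ → ℝ) : Polynomial ℝ →ₗ[ℝ] ℝ :=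
  (Finsupp.linearCombination ℝ E).comp toFinsuppL

theorem phiL_monomial (E : ℕ → ℝ) (m : ℕ) (a : ℝ) :
    phiL E (Polynomial.monomial m a) = a * E m := by
  simp [phiL, toFinsuppL, Polynomial.toFinsupp_monomial, AddMonoidAlgebra.coeff_single, Finsupp.linearCombination_single,
    smul_eq_mul]

theorem phiL_add_pow (E : ℕ → ℝ) (m : ℕ) :
    phiL E (((X : Polynomial ℝ) + 1) ^ m) = ∑ i ∈ Finset.range (m + 1), (m.choose i : ℝ) * E i := by
  have hexp : ((X : Polynomial ℝ) + 1) ^ m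
      = ∑ i ∈ Finset.range (m + 1), Polynomial.monomial i (m.choose i : ℝ) := by
    ext j
    simp only [coeff_X_add_one_pow, Polynomial.finset_sum_coeff, Polynomial.coeff_monomial,
      Finset.sum_ite_eq', Finset.mem_range]
    split_ifs with hj
    · rfl
    · rw [Nat.choose_eq_zero_of_lt (by omega), Nat.cast_zero]
  rw [hexp, map_sum]
  exact Finset.sum_congr rfl fun i _ => phiL_monomial E i _

theorem expandR {R : Type*} [CommRing R] (N k : ℕ) (y : R) :
    ∑ j ∈ Finset.range (N + 1), ((N.choose j : R) * (-1) ^ (N - j)) * y ^ (k + j)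
      = y ^ k * (y - 1) ^ N := by
  rw [sub_eq_add_neg, add_pow, Finset.mul_sum]
  exact Finset.sum_congr rfl fun j _ => by ring

theorem expand2 {R : Type*} [CommRing R] (N k : ℕ) (y : R) :
    ∑ i ∈ Finset.range (k + 1), (k.choose i : R) * y ^ (N + i) = y ^ N * (y + 1) ^ k := by
  rw [add_pow, Finset.mul_sum]
  exact Finset.sum_congr rfl fun i _ => by ring

theorem polyEq (N k : ℕ) :
    (∑ i ∈ Finset.range (k + 1), Polynomial.C (k.choose i : ℝ) * X ^ (N + i))
      = ∑ j ∈ Finset.range (N + 1),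
          Polynomial.C ((N.choose j : ℝ) * (-1) ^ (N - j)) * (X + 1) ^ (k + j) := by
  have h1 : (∑ i ∈ Finset.range (k + 1), Polynomial.C (k.choose i : ℝ) * X ^ (N + i))
      = (X : Polynomial ℝ) ^ N * (X + 1) ^ k := by
    rw [← expand2 N k (X : Polynomial ℝ)]
    exact Finset.sum_congr rfl fun i _ => by rw [map_natCast]
  have h2 : (∑ j ∈ Finset.range (N + 1),
        Polynomial.C ((N.choose j : ℝ) * (-1) ^ (N - j)) * (X + 1) ^ (k + j))
      = ((X : Polynomial ℝ) + 1) ^ k * ((X + 1) - 1) ^ N := by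
    rw [← expandR N k ((X : Polynomial ℝ) + 1)]
    refine Finset.sum_congr rfl fun j _ => by
      rw [map_mul, map_natCast, map_pow, map_neg, map_one]
  rw [h1, h2, add_sub_cancel_right, mul_comm]

theorem keyA (x : ℝ) (E : ℕ → ℝ)
    (hE : (PowerSeries.mk fun m => E m / (m.factorial : ℝ)) * (PowerSeries.exp ℝ + 1) =
      2 * PowerSeries.rescale x (PowerSeries.exp ℝ)) (m : ℕ) :
    (∑ i ∈ Finset.range (m+1), (m.choose i : ℝ) * E i) + E m = 2 * x ^ m := by
  have h := congrArg (PowerSeries.coeff (R := ℝ) m) hE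
  rw [two_mul] at h
  rw [PowerSeries.coeff_mul] at h
  simp only [map_add, PowerSeries.coeff_exp, PowerSeries.coeff_mk, PowerSeries.coeff_rescale,
    PowerSeries.coeff_one, mul_add] at h
  rw [Finset.sum_add_distrib, Finset.Nat.sum_antidiagonal_eq_sum_range_succ
    (fun i j => E i / i.factorial * (algebraMap ℚ ℝ) (1 / j.factorial)),
    Finset.Nat.sum_antidiagonal_eq_sum_range_succ
    (fun i j => E i / i.factorial * (if j = 0 then (1:ℝ) else 0))] at h
  have fne : ∀ j : ℕ, (j.factorial : ℝ) ≠ 0 := fun j => Nat.cast_ne_zero.2 j.factorial_ne_zero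
  have halg : ∀ j : ℕ, (algebraMap ℚ ℝ) (1 / (j.factorial : ℚ)) = 1 / (j.factorial : ℝ) := by
    intro j; rw [map_div₀, map_one, map_natCast]
  have h1 : ∀ i ∈ Finset.range (m+1),
      E i / i.factorial * (algebraMap ℚ ℝ) (1 / ((m - i).factorial : ℚ))
        = (m.choose i : ℝ) * E i / m.factorial := by
    intro i hi
    rw [Finset.mem_range] at hi
    rw [halg, Nat.cast_choose ℝ (by omega : i ≤ m)]
    field_simp
  rw [Finset.sum_congr rfl h1, ← Finset.sum_div] at h
  have h2 : (∑ i ∈ Finset.range (m+1), E i / i.factorial * (if m - i = 0 then (1:ℝ) else 0))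
      = E m / m.factorial := by
    rw [Finset.sum_eq_single m]
    · simp
    · intro b hb hbm
      rw [Finset.mem_range] at hb
      rw [if_neg (by omega), mul_zero]
    · intro hm; exact absurd (Finset.self_mem_range_succ m) hm
  rw [h2] at h
  rw [← add_div, div_eq_iff (fne m)] at h
  rw [h, halg]; field_simp; ring

theorem keyPhi (x : ℝ) (E : ℕ → ℝ)
    (hA : ∀ m, (∑ i ∈ Finset.range (m+1), (m.choose i : ℝ) * E i) + E m = 2 * x ^ m)
    (N k : ℕ) :
    (∑ j ∈ Finset.range (N + 1), ((N.choose j : ℝ) * (-1) ^ (N - j)) * E (k + j))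
      + (∑ i ∈ Finset.range (k + 1), (k.choose i : ℝ) * E (N + i))
      = 2 * (x ^ k * (x - 1) ^ N) := by
  have hS2 : (∑ i ∈ Finset.range (k + 1), (k.choose i : ℝ) * E (N + i))
      = ∑ j ∈ Finset.range (N + 1), ((N.choose j : ℝ) * (-1) ^ (N - j)) *
          (∑ i ∈ Finset.range (k + j + 1), ((k + j).choose i : ℝ) * E i) := by
    have h := congrArg (phiL E) (polyEq N k)
    rw [map_sum, map_sum] at h
    calc ∑ i ∈ Finset.range (k + 1), (k.choose i : ℝ) * E (N + i)
        = ∑ i ∈ Finset.range (k + 1), phiL E (Polynomial.C (k.choose i : ℝ) * X ^ (N + i)) := by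
          refine Finset.sum_congr rfl fun i _ => ?_
          rw [C_mul_X_pow_eq_monomial, phiL_monomial]
      _ = ∑ j ∈ Finset.range (N + 1),
            phiL E (Polynomial.C ((N.choose j : ℝ) * (-1) ^ (N - j)) * (X + 1) ^ (k + j)) := h
      _ = _ := by
          refine Finset.sum_congr rfl fun j _ => ?_
          rw [← Polynomial.smul_eq_C_mul, map_smul, smul_eq_mul, phiL_add_pow]
  rw [hS2, ← Finset.sum_add_distrib]
  have : ∀ j ∈ Finset.range (N + 1),
      ((N.choose j : ℝ) * (-1) ^ (N - j)) * E (k + j)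
        + ((N.choose j : ℝ) * (-1) ^ (N - j)) *
            (∑ i ∈ Finset.range (k + j + 1), ((k + j).choose i : ℝ) * E i)
      = 2 * (((N.choose j : ℝ) * (-1) ^ (N - j)) * x ^ (k + j)) := by
    intro j _
    rw [← mul_add, add_comm (E (k+j)), hA (k + j)]
    ring
  rw [Finset.sum_congr rfl this, ← Finset.mul_sum, expandR N k x]

/-- Polynomial extension of Kim's identity for the Euler polynomials `E_n(x)`
(defined by the generating function `2 e^{x t}/(e^t + 1) = Σ E_n(x) tⁿ/n!`):
`Σ_{j=0}^{n-k} C(n-k,j) (-1)^j E_{j+k}(x)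
  = (-1)^{n+k+1} Σ_{j=0}^{k} C(k,j) E_{n-j}(x) + 2 x^k (1-x)^{n-k}`. -/
theorem statement_8 (n k : ℕ) (hkn : k ≤ n) (x : ℝ) (E : ℕ → ℝ)
    (hE : (PowerSeries.mk fun m => E m / (m.factorial : ℝ)) * (PowerSeries.exp ℝ + 1) =
      2 * PowerSeries.rescale x (PowerSeries.exp ℝ)) :
    ∑ j ∈ Finset.range (n - k + 1), ((n - k).choose j : ℝ) * (-1) ^ j * E (j + k) =
      (-1 : ℝ) ^ (n + k + 1) * (∑ j ∈ Finset.range (k + 1), (k.choose j : ℝ) * E (n - j)) +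
        2 * x ^ k * (1 - x) ^ (n - k) := by
  set N := n - k with hN
  have key := keyPhi x E (keyA x E hE) N k
  have hreind : ∑ j ∈ Finset.range (k + 1), (k.choose j : ℝ) * E (n - j)
      = ∑ i ∈ Finset.range (k + 1), (k.choose i : ℝ) * E (N + i) := by
    rw [← Finset.sum_range_reflect]
    refine Finset.sum_congr rfl fun i hi => ?_
    rw [Finset.mem_range] at hi
    rw [show k + 1 - 1 - i = k - i by omega, Nat.choose_symm (by omega : i ≤ k),
      show n - (k - i) = N + i by omega]
  have hL : ∑ j ∈ Finset.range (N + 1), ((N.choose j : ℝ)) * (-1) ^ j * E (j + k)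
      = (-1 : ℝ) ^ N *
        ∑ j ∈ Finset.range (N + 1), ((N.choose j : ℝ) * (-1) ^ (N - j)) * E (k + j) := by
    rw [Finset.mul_sum]
    refine Finset.sum_congr rfl fun j hj => ?_
    rw [Finset.mem_range] at hj
    have hsign : ((-1 : ℝ)) ^ j = (-1) ^ N * (-1) ^ (N - j) := by
      rw [← pow_add, show N + (N - j) = 2 * (N - j) + j by omega, pow_add, pow_mul]
      norm_num
    rw [add_comm j k, hsign]; ring
  have hsgn2 : (-1 : ℝ) ^ (n + k + 1) = -(-1 : ℝ) ^ N := by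
    rw [show n + k + 1 = 2 * k + (N + 1) by omega, pow_add, pow_mul, pow_succ]
    ring
  have h1x : (1 - x) ^ N = (-1 : ℝ) ^ N * (x - 1) ^ N := by
    rw [show (1 - x) = -(x - 1) by ring, neg_pow]
  rw [hreind, hL, hsgn2, h1x]
  linear_combination ((-1 : ℝ) ^ N) * key
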